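/- arXiv:0912.1255 — 2 statements merged into one kernel-verified Lean document; each statement's English description precedes it below -/
import Mathlib

section
/- For λ(t) = (1+t)^ℓ with ℓ > 0, the dissipation coefficient 2b(t) = λ'(Λ⁻¹(1+t))/λ²(Λ⁻¹(1+t)) arising from the Liouville-type change of variables satisfies 2b(t) ~ (ℓ/(ℓ+1)) · 1/(1+t) as t → ∞, i.e. lim_{t→∞} (1+t)·2b(t) = ℓ/(ℓ+1). -/
open Real MeasureTheory Filter

/-- For `λ(t) = (1+t)^ℓ`, the dissipation coefficient coming from the Liouville
change of variables satisfies `2b(t) ∼ (ℓ/(ℓ+1))/(1+t)` as `t → ∞`. -/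
theorem stmt_6 (ℓ : ℝ) (hℓ : 0 < ℓ)
    (lam Lam Laminv : ℝ → ℝ)
    (hlam : ∀ t : ℝ, lam t = (1 + t) ^ ℓ)
    (hLam : ∀ t : ℝ, Lam t = 1 + ∫ s in (0 : ℝ)..t, lam s)
    (hinv₁ : ∀ t : ℝ, 0 ≤ t → Laminv (Lam t) = t)
    (hinv₂ : ∀ s : ℝ, 1 ≤ s → Lam (Laminv s) = s) :
    Tendsto
      (fun t : ℝ =>
        (1 + t) * (deriv lam (Laminv (1 + t)) / (lam (Laminv (1 + t))) ^ 2))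
      atTop (nhds (ℓ / (ℓ + 1))) := by
  have hk0 : (0:ℝ) < ℓ + 1 := by linarith
  have hk0' : (ℓ + 1 : ℝ) ≠ 0 := hk0.ne'
  have hlamfun : lam = fun t : ℝ => (1 + t) ^ ℓ := funext hlam
  -- explicit formula for Lam
  have hLamEq : ∀ t : ℝ, Lam t = 1 + ((1 + t) ^ (ℓ + 1) - 1) / (ℓ + 1) := by
    intro t
    rw [hLam t, hlamfun]
    have h1 : (∫ s in (0:ℝ)..t, (1 + s) ^ ℓ) = ∫ x in (1:ℝ)..(1 + t), x ^ ℓ := by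
      simpa using intervalIntegral.integral_comp_add_left (a := 0) (b := t) (fun x : ℝ => x ^ ℓ) 1
    rw [h1, integral_rpow (Or.inl (by linarith : (-1:ℝ) < ℓ))]
    rw [Real.one_rpow]
  -- explicit formula for Laminv on [1, ∞)
  have hInv : ∀ s : ℝ, 1 ≤ s →
      Laminv s = ((ℓ + 1) * (s - 1) + 1) ^ (ℓ + 1)⁻¹ - 1 := by
    intro s hs
    set A : ℝ := (ℓ + 1) * (s - 1) + 1 with hA
    have hA1 : 1 ≤ A := by nlinarith
    set t : ℝ := A ^ (ℓ + 1)⁻¹ - 1 with ht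
    have h1t : 1 + t = A ^ (ℓ + 1)⁻¹ := by ring
    have hApow : (1 + t) ^ (ℓ + 1) = A := by
      rw [h1t, Real.rpow_inv_rpow (by linarith) hk0']
    have ht0 : 0 ≤ t := by
      have h1A : (1:ℝ) ≤ A ^ (ℓ + 1)⁻¹ := Real.one_le_rpow hA1 (by positivity)
      simp only [ht]; linarith
    have hLt : Lam t = s := by
      rw [hLamEq t, hApow]
      field_simp
      rw [hA]; ring
    calc Laminv s = Laminv (Lam t) := by rw [hLt]
      _ = t := hinv₁ t ht0
  -- eventual equality with an explicit rational function
  have hEv : (fun t : ℝ =>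
        (1 + t) * (deriv lam (Laminv (1 + t)) / (lam (Laminv (1 + t))) ^ 2))
      =ᶠ[atTop] fun t : ℝ => ℓ * (1 + t) / ((ℓ + 1) * t + 1) := by
    filter_upwards [eventually_ge_atTop (0:ℝ)] with t ht
    have hs : (1:ℝ) ≤ 1 + t := by linarith
    set A : ℝ := (ℓ + 1) * t + 1 with hA
    have hA1 : 1 ≤ A := by nlinarith
    have hA0 : 0 < A := by linarith
    set v : ℝ := A ^ (ℓ + 1)⁻¹ with hv
    have hv1 : 1 ≤ v := Real.one_le_rpow hA1 (by positivity)
    have hv0 : 0 < v := by linarith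
    have hu : Laminv (1 + t) = v - 1 := by
      rw [hInv (1 + t) hs]
      norm_num [hv, hA]
    have h1u : 1 + (v - 1) = v := by ring
    have hvA : v ^ (ℓ + 1) = A := Real.rpow_inv_rpow hA0.le hk0'
    -- derivative of lam at v - 1
    have hd : HasDerivAt (fun x : ℝ => (1 + x) ^ ℓ) (ℓ * v ^ (ℓ - 1)) (v - 1) := by
      have h1 : HasDerivAt (fun x : ℝ => 1 + x) 1 (v - 1) :=
        (hasDerivAt_id (v - 1)).const_add 1
      have h2 : HasDerivAt (fun y : ℝ => y ^ ℓ) (ℓ * v ^ (ℓ - 1)) v :=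
        Real.hasDerivAt_rpow_const (Or.inl hv0.ne')
      have h2' : HasDerivAt (fun y : ℝ => y ^ ℓ) (ℓ * v ^ (ℓ - 1)) (1 + (v - 1)) := by
        rw [h1u]; exact h2
      have h3 := h2'.comp (v - 1) h1
      rw [mul_one] at h3
      exact h3
    have hderiv : deriv lam (Laminv (1 + t)) = ℓ * v ^ (ℓ - 1) := by
      rw [hu, hlamfun, hd.deriv]
    have hlamval : lam (Laminv (1 + t)) = v ^ ℓ := by
      rw [hu, hlam, h1u]
    rw [hderiv, hlamval]
    have hsq : (v ^ ℓ) ^ 2 = v ^ (2 * ℓ) := by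
      rw [← Real.rpow_natCast (v ^ ℓ) 2, ← Real.rpow_mul hv0.le]
      norm_num [mul_comm]
    rw [hsq]
    have hdiv : v ^ (ℓ - 1) / v ^ (2 * ℓ) = A⁻¹ := by
      rw [← Real.rpow_sub hv0, ← hvA, ← Real.rpow_neg_one (v ^ (ℓ + 1)),
        ← Real.rpow_mul hv0.le]
      ring_nf
    rw [mul_div_assoc, hdiv]
    field_simp
  -- the limit of the rational function
  have hlim : Tendsto (fun t : ℝ => ℓ * (1 + t) / ((ℓ + 1) * t + 1)) atTop
      (nhds (ℓ / (ℓ + 1))) := by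
    have h1 : Tendsto (fun t : ℝ => (ℓ * t⁻¹ + ℓ) / ((ℓ + 1) + t⁻¹)) atTop
        (nhds ((ℓ * 0 + ℓ) / ((ℓ + 1) + 0))) := by
      apply Tendsto.div
      · exact (tendsto_inv_atTop_zero.const_mul ℓ).add tendsto_const_nhds
      · exact tendsto_const_nhds.add tendsto_inv_atTop_zero
      · simpa using hk0'
    have h2 : (fun t : ℝ => (ℓ * t⁻¹ + ℓ) / ((ℓ + 1) + t⁻¹))
        =ᶠ[atTop] fun t : ℝ => ℓ * (1 + t) / ((ℓ + 1) * t + 1) := by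
      filter_upwards [eventually_gt_atTop (0:ℝ)] with t ht
      have hne : ((ℓ + 1) * t + 1 : ℝ) ≠ 0 := by positivity
      field_simp
    simpa using h1.congr' h2
  exact hlim.congr' hEv.symm
end

section
/- Let μ(t) = μ₀/(1+t) with μ₀ > 0 and σ(t) = μ(t)·sin(t^α) with 0 < α < 1. Then sup_{t>0} |∫₀ᵗ σ(s) ds| < ∞. -/
open Real MeasureTheory

/-- The oscillating part `σ(t) = (μ₀/(1+t)) sin(t^α)`, `0 < α < 1`, has a
uniformly bounded primitive. -/
theorem stmt_10 (μ₀ α : ℝ) (hμ : 0 < μ₀) (hα₀ : 0 < α) (hα₁ : α < 1) :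
    ∃ M : ℝ, ∀ t : ℝ, 0 < t →
      |∫ s in (0 : ℝ)..t, (μ₀ / (1 + s)) * Real.sin (s ^ α)| ≤ M := by
  set f : ℝ → ℝ := fun s => (μ₀ / (1 + s)) * Real.sin (s ^ α) with hf_def
  set g : ℝ → ℝ := fun s => s ^ (1 - α) / (α * (1 + s)) with hg_def
  set g' : ℝ → ℝ := fun s =>
    ((1 - α) * s ^ (1 - α - 1) * (α * (1 + s)) - s ^ (1 - α) * α) / (α * (1 + s)) ^ 2
    with hg'_def
  set H : ℝ → ℝ := fun s => -μ₀ * (g s * Real.cos (s ^ α)) with hH_def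
  set G : ℝ → ℝ := fun s => -μ₀ * (g' s * Real.cos (s ^ α)) with hG_def
  have hrpow_cont : Continuous fun s : ℝ => s ^ α := Real.continuous_rpow_const hα₀.le
  have hcos_cont : Continuous fun s : ℝ => Real.cos (s ^ α) :=
    Real.continuous_cos.comp hrpow_cont
  have hf_cont : ∀ T : Set ℝ, T ⊆ Set.Ici 0 → ContinuousOn f T := by
    intro T hT
    apply ContinuousOn.mul
    · apply ContinuousOn.div continuousOn_const (continuous_const.add continuous_id).continuousOn
      intro x hx
      have h0 : (0:ℝ) ≤ x := hT hx
      intro h; simp only [Pi.add_apply, id_eq] at h; linarith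
    · exact (Real.continuous_sin.comp hrpow_cont).continuousOn
  have hf_bound : ∀ s : ℝ, 0 ≤ s → |f s| ≤ μ₀ := by
    intro s hs
    have h1s : (0:ℝ) < 1 + s := by linarith
    have h1 : μ₀ / (1 + s) ≤ μ₀ := by
      rw [div_le_iff₀ h1s]; nlinarith
    rw [abs_mul, abs_of_nonneg (show (0:ℝ) ≤ μ₀ / (1 + s) by positivity)]
    calc μ₀ / (1 + s) * |Real.sin (s ^ α)| ≤ μ₀ / (1 + s) * 1 :=
          mul_le_mul_of_nonneg_left (Real.abs_sin_le_one _) (by positivity)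
      _ ≤ μ₀ := by rw [mul_one]; exact h1
  refine ⟨μ₀ + 2 * μ₀ / α + 2 * μ₀ / α ^ 2, fun t ht => ?_⟩
  have hM₁ : (0:ℝ) ≤ 2 * μ₀ / α := by positivity
  have hM₂ : (0:ℝ) ≤ 2 * μ₀ / α ^ 2 := by positivity
  rcases le_or_gt t 1 with htle | htgt
  · -- small t : trivial bound
    have := intervalIntegral.norm_integral_le_of_norm_le_const (C := μ₀) (f := f)
      (a := 0) (b := t) (fun x hx => by
        rw [Set.uIoc_of_le ht.le] at hx
        exact hf_bound x hx.1.le)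
    rw [Real.norm_eq_abs] at this
    have h2 : |t - 0| ≤ 1 := by rw [sub_zero, abs_of_pos ht]; exact htle
    nlinarith [abs_nonneg (∫ s in (0:ℝ)..t, f s)]
  -- now 1 < t
  have ht1 : (1:ℝ) ≤ t := htgt.le
  have hIcc : Set.uIcc (1:ℝ) t = Set.Icc 1 t := Set.uIcc_of_le ht1
  -- derivative of H on [1, t]
  have hderiv : ∀ s ∈ Set.uIcc (1:ℝ) t, HasDerivAt H (f s + G s) s := by
    intro s hs
    rw [hIcc] at hs
    have hs1 : (1:ℝ) ≤ s := hs.1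
    have hs0 : (0:ℝ) < s := lt_of_lt_of_le one_pos hs1
    have hden0 : α * (1 + s) ≠ 0 := by positivity
    have hp : HasDerivAt (fun x : ℝ => x ^ (1 - α)) ((1 - α) * s ^ (1 - α - 1)) s :=
      Real.hasDerivAt_rpow_const (Or.inl hs0.ne')
    have hden : HasDerivAt (fun x : ℝ => α * (1 + x)) α s := by
      simpa using ((hasDerivAt_id s).const_add (1:ℝ)).const_mul α
    have hg : HasDerivAt g (g' s) s := hp.div hden hden0
    have hq : HasDerivAt (fun x : ℝ => x ^ α) (α * s ^ (α - 1)) s :=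
      Real.hasDerivAt_rpow_const (Or.inl hs0.ne')
    have hφ : HasDerivAt (fun x : ℝ => Real.cos (x ^ α))
        (-Real.sin (s ^ α) * (α * s ^ (α - 1))) s := hq.cos
    have hgh := (hg.mul hφ).const_mul (-μ₀)
    have key : s ^ (1 - α) * s ^ (α - 1) = 1 := by
      rw [← Real.rpow_add hs0]; norm_num
    have h1s : (0:ℝ) < 1 + s := by linarith
    have hgs : g s * (α * s ^ (α - 1)) = 1 / (1 + s) := by
      have h1s' : (1:ℝ) + s ≠ 0 := h1s.ne'
      have hα' : α ≠ 0 := hα₀.ne'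
      simp only [hg_def]
      have hrw : s ^ (1 - α) / (α * (1 + s)) * (α * s ^ (α - 1))
          = (s ^ (1 - α) * s ^ (α - 1)) * α / (α * (1 + s)) := by ring
      rw [hrw, key, one_mul, div_eq_div_iff (by positivity) h1s.ne']
      ring
    refine hgh.congr_deriv ?_
    have hterm : g s * (-Real.sin (s ^ α) * (α * s ^ (α - 1)))
        = -(Real.sin (s ^ α) * (1 / (1 + s))) := by
      calc g s * (-Real.sin (s ^ α) * (α * s ^ (α - 1)))
          = -(Real.sin (s ^ α) * (g s * (α * s ^ (α - 1)))) := by ring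
        _ = -(Real.sin (s ^ α) * (1 / (1 + s))) := by rw [hgs]
    rw [mul_add, hterm]
    simp only [hf_def, hG_def]
    field_simp
    ring
  -- integrability / continuity facts on [1, t]
  have hx0 : ∀ x ∈ Set.Icc (1:ℝ) t, x ≠ 0 := fun x hx =>
    (lt_of_lt_of_le one_pos hx.1).ne'
  have hfint : IntervalIntegrable f volume 1 t := by
    apply (hf_cont _ ?_).intervalIntegrable
    rw [hIcc]; intro x hx; exact le_trans zero_le_one hx.1
  have hg'cont : ContinuousOn g' (Set.Icc (1:ℝ) t) := by
    apply ContinuousOn.div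
    · apply ContinuousOn.sub
      · exact (continuousOn_const.mul (continuousOn_id.rpow_const
          (fun x hx => Or.inl (hx0 x hx)))).mul
          (continuousOn_const.mul (continuousOn_const.add continuousOn_id))
      · exact (continuousOn_id.rpow_const (fun x hx => Or.inl (hx0 x hx))).mul
          continuousOn_const
    · exact (continuousOn_const.mul (continuousOn_const.add continuousOn_id)).pow 2
    · intro x hx
      have h1 : (1:ℝ) ≤ x := hx.1
      positivity
  have hGcont : ContinuousOn G (Set.uIcc (1:ℝ) t) := by
    rw [hIcc]
    exact continuousOn_const.mul (hg'cont.mul hcos_cont.continuousOn)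
  have hGint : IntervalIntegrable G volume 1 t := hGcont.intervalIntegrable
  -- fundamental theorem of calculus
  have hFTC : ∫ s in (1:ℝ)..t, (f s + G s) = H t - H 1 :=
    intervalIntegral.integral_eq_sub_of_hasDerivAt hderiv (hfint.add hGint)
  have hsplit : ∫ s in (1:ℝ)..t, f s = (H t - H 1) - ∫ s in (1:ℝ)..t, G s := by
    rw [← hFTC, intervalIntegral.integral_add hfint hGint]; ring
  -- pointwise bound on G
  have hGbound : ∀ s ∈ Set.Icc (1:ℝ) t, |G s| ≤ (2 * μ₀ / α) * s ^ (-1 - α) := by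
    intro s hs
    have hs1 : (1:ℝ) ≤ s := hs.1
    have hs0 : (0:ℝ) < s := lt_of_lt_of_le one_pos hs1
    have hc : (0:ℝ) < s ^ (-1 - α) := Real.rpow_pos_of_pos hs0 _
    have ha : s ^ (1 - α - 1) = s ^ (-1 - α) * s := by
      have h : s ^ (-1 - α) * s ^ (1:ℝ) = s ^ (1 - α - 1) := by
        rw [← Real.rpow_add hs0]; congr 1; ring
      simpa [Real.rpow_one] using h.symm
    have hb : s ^ (1 - α) = s ^ (-1 - α) * s ^ 2 := by
      have h : s ^ (-1 - α) * s ^ ((2:ℝ)) = s ^ (1 - α) := by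
        rw [← Real.rpow_add hs0]; congr 1; ring
      rw [Real.rpow_two] at h
      exact h.symm
    have h1s : (0:ℝ) < 1 + s := by linarith
    have hden : (0:ℝ) < (α * (1 + s)) ^ 2 := by positivity
    have habs : |g' s| ≤ (2 / α) * s ^ (-1 - α) := by
      simp only [hg'_def]
      rw [abs_div, abs_of_pos hden, div_le_iff₀ hden]
      have htr : |(1 - α) * s ^ (1 - α - 1) * (α * (1 + s)) - s ^ (1 - α) * α|
          ≤ (1 - α) * s ^ (1 - α - 1) * (α * (1 + s)) + s ^ (1 - α) * α := by
        refine le_trans (abs_sub _ _) ?_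
        have e1 : |(1 - α) * s ^ (1 - α - 1) * (α * (1 + s))|
            = (1 - α) * s ^ (1 - α - 1) * (α * (1 + s)) := by
          apply abs_of_nonneg
          have : (0:ℝ) < s ^ (1 - α - 1) := Real.rpow_pos_of_pos hs0 _
          have h1α : (0:ℝ) ≤ 1 - α := by linarith
          positivity
        have e2 : |s ^ (1 - α) * α| = s ^ (1 - α) * α := by
          apply abs_of_nonneg
          have : (0:ℝ) < s ^ (1 - α) := Real.rpow_pos_of_pos hs0 _
          positivity
        rw [e1, e2]
      refine le_trans htr ?_
      rw [ha, hb]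
      have heq : 2 / α * s ^ (-1 - α) * (α * (1 + s)) ^ 2
          = 2 * s ^ (-1 - α) * α * (1 + s) ^ 2 := by
        field_simp
      rw [heq]
      nlinarith [mul_nonneg (mul_nonneg hc.le hα₀.le) hs0.le,
        mul_nonneg (mul_nonneg hc.le hα₀.le) (sq_nonneg s),
        mul_nonneg (mul_nonneg (mul_nonneg hc.le hα₀.le) hα₀.le) hs0.le,
        mul_nonneg (mul_nonneg (mul_nonneg hc.le hα₀.le) hα₀.le) (sq_nonneg s),
        mul_nonneg hc.le hα₀.le]
    calc |G s| = μ₀ * (|g' s| * |Real.cos (s ^ α)|) := by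
          simp only [hG_def]; rw [abs_mul, abs_mul, abs_neg, abs_of_pos hμ]
      _ ≤ μ₀ * (((2 / α) * s ^ (-1 - α)) * 1) := by
          apply mul_le_mul_of_nonneg_left _ hμ.le
          exact mul_le_mul habs (Real.abs_cos_le_one _) (abs_nonneg _) (by positivity)
      _ = (2 * μ₀ / α) * s ^ (-1 - α) := by ring
  -- bound the integral of G
  have hpow_int : IntervalIntegrable (fun s : ℝ => (2 * μ₀ / α) * s ^ (-1 - α)) volume 1 t := by
    apply ContinuousOn.intervalIntegrable
    rw [hIcc]
    exact continuousOn_const.mul (continuousOn_id.rpow_const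
      (fun x hx => Or.inl (hx0 x hx)))
  have hGintbound : |∫ s in (1:ℝ)..t, G s| ≤ 2 * μ₀ / α ^ 2 := by
    have h1 : |∫ s in (1:ℝ)..t, G s| ≤ ∫ s in (1:ℝ)..t, |G s| :=
      intervalIntegral.abs_integral_le_integral_abs ht1
    have h2 : ∫ s in (1:ℝ)..t, |G s| ≤ ∫ s in (1:ℝ)..t, (2 * μ₀ / α) * s ^ (-1 - α) :=
      intervalIntegral.integral_mono_on ht1 hGint.abs hpow_int hGbound
    have h3 : ∫ s in (1:ℝ)..t, (2 * μ₀ / α) * s ^ (-1 - α)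
        = (2 * μ₀ / α) * ((t ^ (-α) - 1) / (-α)) := by
      rw [intervalIntegral.integral_const_mul]
      rw [integral_rpow (Or.inr ⟨by intro h; nlinarith, by
        rw [Set.uIcc_of_le ht1]; intro hx; exact absurd hx.1 (by norm_num)⟩)]
      rw [show (-1 : ℝ) - α + 1 = -α by ring, Real.one_rpow]
    have ht' : t ^ (-α) ≤ 1 :=
      Real.rpow_le_one_of_one_le_of_nonpos ht1 (by linarith)
    have h4 : (2 * μ₀ / α) * ((t ^ (-α) - 1) / (-α)) ≤ 2 * μ₀ / α ^ 2 := by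
      have he : (t ^ (-α) - 1) / (-α) = (1 - t ^ (-α)) / α := by
        rw [div_neg]; ring
      rw [he]
      calc (2 * μ₀ / α) * ((1 - t ^ (-α)) / α) ≤ (2 * μ₀ / α) * (1 / α) := by
            gcongr
            · linarith [Real.rpow_pos_of_pos ht (-α)]
        _ = 2 * μ₀ / α ^ 2 := by field_simp
    linarith
  -- bound on H
  have hHbound : ∀ s : ℝ, 1 ≤ s → |H s| ≤ μ₀ / α := by
    intro s hs1
    have hs0 : (0:ℝ) < s := lt_of_lt_of_le one_pos hs1
    have h1s : (0:ℝ) < 1 + s := by linarith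
    have hgpos : 0 ≤ g s := by
      simp only [hg_def]
      have : (0:ℝ) < s ^ (1 - α) := Real.rpow_pos_of_pos hs0 _
      positivity
    have hgle : g s ≤ 1 / α := by
      simp only [hg_def]
      rw [div_le_div_iff₀ (by positivity) hα₀]
      have h1 : s ^ (1 - α) ≤ s := by
        calc s ^ (1 - α) ≤ s ^ (1:ℝ) :=
              Real.rpow_le_rpow_of_exponent_le hs1 (by linarith)
          _ = s := Real.rpow_one s
      nlinarith
    simp only [hH_def]
    rw [abs_mul, abs_mul, abs_neg, abs_of_pos hμ, abs_of_nonneg hgpos]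
    calc μ₀ * (g s * |Real.cos (s ^ α)|) ≤ μ₀ * ((1 / α) * 1) := by
          apply mul_le_mul_of_nonneg_left _ hμ.le
          exact mul_le_mul hgle (Real.abs_cos_le_one _) (abs_nonneg _) (by positivity)
      _ = μ₀ / α := by ring
  -- assemble
  have hfint01 : IntervalIntegrable f volume 0 1 := by
    apply (hf_cont _ ?_).intervalIntegrable
    rw [Set.uIcc_of_le zero_le_one]; intro x hx; exact hx.1
  have hsum : ∫ s in (0:ℝ)..t, f s = (∫ s in (0:ℝ)..1, f s) + ∫ s in (1:ℝ)..t, f s :=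
    (intervalIntegral.integral_add_adjacent_intervals hfint01 hfint).symm
  have h01 : |∫ s in (0:ℝ)..1, f s| ≤ μ₀ := by
    have := intervalIntegral.norm_integral_le_of_norm_le_const (C := μ₀) (f := f)
      (a := 0) (b := 1) (fun x hx => by
        rw [Set.uIoc_of_le zero_le_one] at hx
        exact hf_bound x hx.1.le)
    rw [Real.norm_eq_abs] at this
    simpa using this
  have h1t : |∫ s in (1:ℝ)..t, f s| ≤ 2 * μ₀ / α + 2 * μ₀ / α ^ 2 := by
    rw [hsplit]
    have hHt := hHbound t ht1
    have hH1 := hHbound 1 le_rfl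
    calc |(H t - H 1) - ∫ s in (1:ℝ)..t, G s| ≤ |H t - H 1| + |∫ s in (1:ℝ)..t, G s| :=
          abs_sub _ _
      _ ≤ (|H t| + |H 1|) + (2 * μ₀ / α ^ 2) :=
          add_le_add (abs_sub _ _) hGintbound
      _ ≤ (μ₀ / α + μ₀ / α) + 2 * μ₀ / α ^ 2 := by gcongr
      _ = 2 * μ₀ / α + 2 * μ₀ / α ^ 2 := by ring
  calc |∫ s in (0:ℝ)..t, f s| ≤ |∫ s in (0:ℝ)..1, f s| + |∫ s in (1:ℝ)..t, f s| := by
        rw [hsum]; exact abs_add_le _ _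
    _ ≤ μ₀ + (2 * μ₀ / α + 2 * μ₀ / α ^ 2) := by gcongr
    _ = μ₀ + 2 * μ₀ / α + 2 * μ₀ / α ^ 2 := by ring
end
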